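/- Let T be a cut-equivalent (Gomory-Hu) tree of a finite undirected graph G with edge capacities c_G. Then the sum over all edges uv of G of c_G(u,v) times the hop-distance between u and v in T equals the sum of the capacities of the edges of T. -/

import Mathlib

open SimpleGraph Walk Finset

namespace GHaux

variable {V : Type*} [DecidableEq V] {T : SimpleGraph V}

lemma concat_isPath {u v w : V} {p : T.Walk u v} (hp : p.IsPath) (h : T.Adj v w)
    (hw : w ∉ p.support) : (p.concat h).IsPath := by
  rw [← Walk.isPath_reverse_iff, Walk.reverse_concat]
  exact hp.reverse.cons (by simpa [Walk.support_reverse] using hw)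

lemma distNe (hT : T.IsTree) {u v : V} (h : T.Adj u v) (x : V) : T.dist x u ≠ T.dist x v := by
  intro heq
  obtain ⟨p, hp, hl⟩ := hT.isConnected.exists_path_of_dist x u
  have hv : v ∉ p.support := by
    intro hv
    have h1 : T.dist x v ≤ (p.takeUntil v hv).length := dist_le _
    have h2 := p.length_takeUntil_le hv
    have h5 : (p.takeUntil v hv).length + (p.dropUntil v hv).length = p.length := by
      rw [← Walk.length_append, p.take_spec hv]
    have h6 : (p.dropUntil v hv).length = 0 := by omega
    exact h.ne' (Walk.eq_of_length_eq_zero (p := p.dropUntil v hv) h6)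
  have hq : (p.concat h).IsPath := concat_isPath hp h hv
  obtain ⟨r, hr, hrl⟩ := hT.isConnected.exists_path_of_dist x v
  obtain ⟨w, -, hu⟩ := hT.existsUnique_path x v
  have heq2 : p.concat h = r := (hu _ hq).trans (hu _ hr).symm
  have hlen : (p.concat h).length = r.length := by rw [heq2]
  rw [Walk.length_concat, hl, hrl] at hlen
  omega

lemma cross (hT : T.IsTree) {u v x y : V} (huv : T.Adj u v) (hxy : T.Adj x y)
    (h1 : T.dist x u < T.dist x v) (h2 : T.dist y v < T.dist y u) : x = u ∧ y = v := by
  have hc := hT.isConnected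
  have duv : T.dist u v = 1 := dist_eq_one_iff_adj.mpr huv
  have dxy : T.dist x y = 1 := dist_eq_one_iff_adj.mpr hxy
  have dyx : T.dist y x = 1 := dist_eq_one_iff_adj.mpr hxy.symm
  have t1 : T.dist x v ≤ T.dist x y + T.dist y v := hc.dist_triangle
  have t2 : T.dist y u ≤ T.dist y x + T.dist x u := hc.dist_triangle
  have hk1 : T.dist x u = T.dist y v := by omega
  have hk2 : T.dist x v = T.dist x u + 1 := by omega
  have hk3 : T.dist y u = T.dist y v + 1 := by omega
  rcases Nat.eq_zero_or_pos (T.dist x u) with h0 | hpos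
  · exact ⟨hc.dist_eq_zero_iff.mp h0, hc.dist_eq_zero_iff.mp (by omega)⟩
  · exfalso
    obtain ⟨q, hqp, hql⟩ := hc.exists_path_of_dist y v
    have hxq : x ∉ q.support := by
      intro hx
      have h1' : T.dist x v ≤ (q.dropUntil x hx).length := dist_le _
      have h5 : (q.takeUntil x hx).length + (q.dropUntil x hx).length = q.length := by
        rw [← Walk.length_append, q.take_spec hx]
      omega
    have hq1 : (Walk.cons hxy q).IsPath := hqp.cons hxq
    obtain ⟨p, hpp, hpl⟩ := hc.exists_path_of_dist x u
    have hvp : v ∉ p.support := by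
      intro hv
      have h1' : T.dist x v ≤ (p.takeUntil v hv).length := dist_le _
      have h2' := p.length_takeUntil_le hv
      omega
    have hp1 : (p.concat huv).IsPath := concat_isPath hpp huv hvp
    obtain ⟨w, -, hu⟩ := hT.existsUnique_path x v
    have heq2 : p.concat huv = Walk.cons hxy q := (hu _ hp1).trans (hu _ hq1).symm
    have humem : u ∈ (p.concat huv).support := by
      rw [Walk.support_concat]
      exact List.mem_append_left _ p.end_mem_support
    rw [heq2, Walk.support_cons] at humem
    rcases List.mem_cons.mp humem with h' | h'
    · have : T.dist x u = 0 := by rw [h']; exact hc.dist_eq_zero_iff.mpr rfl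
      omega
    · have h1' : T.dist y u ≤ (q.takeUntil u h').length := dist_le _
      have h2' := q.length_takeUntil_le h'
      omega

lemma count [Fintype V] [DecidableEq V] [DecidableRel T.Adj] (hT : T.IsTree) (a b : V) :
    (∑ u, ∑ v, (if T.Adj u v ∧ T.dist a u < T.dist a v ∧ T.dist b v < T.dist b u
      then (1 : ℝ) else 0)) = (T.dist a b : ℝ) := by
  have hc := hT.isConnected
  suffices h : ∀ n (b : V), T.dist a b = n →
      (∑ u, ∑ v, (if T.Adj u v ∧ T.dist a u < T.dist a v ∧ T.dist b v < T.dist b u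
        then (1 : ℝ) else 0)) = (n : ℝ) by
    rw [h (T.dist a b) b rfl]
  intro n
  induction n with
  | zero =>
    intro b hb
    have hab : a = b := hc.dist_eq_zero_iff.mp hb
    subst hab
    simp only [Nat.cast_zero]
    refine Finset.sum_eq_zero fun u _ => Finset.sum_eq_zero fun v _ => ?_
    rw [if_neg]
    rintro ⟨-, h1, h2⟩
    omega
  | succ n ih =>
    intro b hb
    have hba : b ≠ a := by
      intro h; subst h; rw [hc.dist_eq_zero_iff.mpr rfl] at hb; omega
    obtain ⟨p, hpl⟩ := hc.exists_walk_length_eq_dist b a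
    obtain ⟨c, hbc, q, rfl⟩ := Walk.exists_eq_cons_of_ne hba p
    have hql : q.length = n := by
      rw [Walk.length_cons] at hpl
      rw [dist_comm] at hpl
      omega
    have hac : T.dist a c = n := by
      have h1 : T.dist a c ≤ n := by
        rw [← hql, ← Walk.length_reverse]
        exact dist_le _
      have h2 : T.dist a b ≤ T.dist a c + T.dist c b := hc.dist_triangle
      have h3 : T.dist c b = 1 := dist_eq_one_iff_adj.mpr hbc.symm
      omega
    have hdbc : T.dist b c = 1 := dist_eq_one_iff_adj.mpr hbc
    have key : ∀ u v, (if T.Adj u v ∧ T.dist a u < T.dist a v ∧ T.dist b v < T.dist b u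
        then (1 : ℝ) else 0)
        = (if T.Adj u v ∧ T.dist a u < T.dist a v ∧ T.dist c v < T.dist c u
            then (1 : ℝ) else 0)
          + (if u = c ∧ v = b then (1 : ℝ) else 0) := by
      intro u v
      by_cases hcb : u = c ∧ v = b
      · obtain ⟨rfl, rfl⟩ := hcb
        rw [if_pos ⟨hbc.symm, by omega, by rw [hc.dist_eq_zero_iff.mpr rfl]; omega⟩,
          if_neg (by
            rintro ⟨-, -, h2⟩
            rw [hc.dist_eq_zero_iff.mpr rfl] at h2; omega),
          if_pos ⟨rfl, rfl⟩]
        ring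
      · rw [if_neg hcb, add_zero]
        by_cases hadj : T.Adj u v
        · by_cases hbc' : u = b ∧ v = c
          · obtain ⟨rfl, rfl⟩ := hbc'
            rw [if_neg (by rintro ⟨-, h1, -⟩; omega),
              if_neg (by rintro ⟨-, h1, -⟩; omega)]
          · have hiff : T.dist b v < T.dist b u ↔ T.dist c v < T.dist c u := by
              constructor
              · intro hlt
                rcases Nat.lt_or_ge (T.dist c v) (T.dist c u) with h' | h'
                · exact h'
                · exfalso
                  have hne := distNe hT hadj c
                  have h'' : T.dist c u < T.dist c v := by omega
                  obtain ⟨e1, e2⟩ := cross hT hadj hbc.symm h'' hlt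
                  exact hcb ⟨e1.symm, e2.symm⟩
              · intro hlt
                rcases Nat.lt_or_ge (T.dist b v) (T.dist b u) with h' | h'
                · exact h'
                · exfalso
                  have hne := distNe hT hadj b
                  have h'' : T.dist b u < T.dist b v := by omega
                  obtain ⟨e1, e2⟩ := cross hT hadj hbc h'' hlt
                  exact hbc' ⟨e1.symm, e2.symm⟩
            by_cases hcond : T.dist a u < T.dist a v ∧ T.dist b v < T.dist b u
            · rw [if_pos ⟨hadj, hcond⟩, if_pos ⟨hadj, hcond.1, hiff.mp hcond.2⟩]
            · rw [if_neg (by rintro ⟨-, h1, h2⟩; exact hcond ⟨h1, h2⟩),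
                if_neg (by rintro ⟨-, h1, h2⟩; exact hcond ⟨h1, hiff.mpr h2⟩)]
        · rw [if_neg (fun h => hadj h.1), if_neg (fun h => hadj h.1)]
    simp_rw [key, Finset.sum_add_distrib]
    rw [ih c hac]
    have hone : (∑ u, ∑ v, (if u = c ∧ v = b then (1 : ℝ) else 0)) = 1 := by
      simp [ite_and]
    rw [hone]
    push_cast
    ring

lemma swap4 {α : Type*} [Fintype α] {M : Type*} [AddCommMonoid M]
    (f : α → α → α → α → M) :
    (∑ u, ∑ v, ∑ a, ∑ b, f u v a b) = ∑ a, ∑ b, ∑ u, ∑ v, f u v a b := by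
  calc (∑ u, ∑ v, ∑ a, ∑ b, f u v a b)
      = ∑ u, ∑ a, ∑ v, ∑ b, f u v a b :=
        Finset.sum_congr rfl fun u _ => Finset.sum_comm
    _ = ∑ a, ∑ u, ∑ v, ∑ b, f u v a b := Finset.sum_comm
    _ = ∑ a, ∑ u, ∑ b, ∑ v, f u v a b :=
        Finset.sum_congr rfl fun a _ => Finset.sum_congr rfl fun u _ => Finset.sum_comm
    _ = ∑ a, ∑ b, ∑ u, ∑ v, f u v a b :=
        Finset.sum_congr rfl fun a _ => Finset.sum_comm

end GHaux

/-- For a cut-equivalent (Gomory–Hu) tree `T` of a graph `G` with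
edge capacities `cG`, the sum over graph edges of `cG(u,v) · dist_T(u,v)` equals the
sum of the capacities of the tree edges.  Sums are over ordered pairs (each edge is
counted twice on both sides).  The cut-equivalence hypothesis says the capacity of a
tree edge `(u,v)` equals the capacity in `G` of the bipartition obtained by removing
that edge from `T` (a vertex `w` lies on the `u`-side iff `dist_T(w,u) < dist_T(w,v)`). -/
theorem stmt_1 {V : Type*} [Fintype V] [DecidableEq V] (G T : SimpleGraph V)
    [DecidableRel G.Adj] [DecidableRel T.Adj] (hT : T.IsTree)
    (cG cT : V → V → ℝ)
    (hsG : ∀ u v, cG u v = cG v u) (hsT : ∀ u v, cT u v = cT v u)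
    (hcut : ∀ u v, T.Adj u v → cT u v =
      ∑ a, ∑ b, if G.Adj a b ∧ T.dist a u < T.dist a v ∧ ¬ (T.dist b u < T.dist b v)
        then cG a b else 0) :
    (∑ a, ∑ b, if G.Adj a b then cG a b * (T.dist a b : ℝ) else 0)
      = ∑ u, ∑ v, if T.Adj u v then cT u v else 0 := by
  have hc := hT.isConnected
  have step1 : ∀ u v, (if T.Adj u v then cT u v else 0)
      = ∑ a, ∑ b, (if T.Adj u v ∧ G.Adj a b ∧ T.dist a u < T.dist a v ∧
          T.dist b v < T.dist b u then cG a b else 0) := by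
    intro u v
    by_cases hadj : T.Adj u v
    · rw [if_pos hadj, hcut u v hadj]
      refine Finset.sum_congr rfl fun a _ => Finset.sum_congr rfl fun b _ => ?_
      have hne := GHaux.distNe hT hadj b
      by_cases hcond : G.Adj a b ∧ T.dist a u < T.dist a v ∧ ¬ (T.dist b u < T.dist b v)
      · obtain ⟨hGab, h1, h2⟩ := hcond
        rw [if_pos ⟨hGab, h1, h2⟩, if_pos ⟨hadj, hGab, h1, by omega⟩]
      · rw [if_neg hcond, if_neg (by rintro ⟨-, h1, h2, h3⟩; exact hcond ⟨h1, h2, by omega⟩)]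
    · rw [if_neg hadj]
      refine (Finset.sum_eq_zero fun a _ => Finset.sum_eq_zero fun b _ => ?_).symm
      exact if_neg fun h => hadj h.1
  rw [show (∑ u, ∑ v, if T.Adj u v then cT u v else 0)
      = ∑ u, ∑ v, ∑ a, ∑ b, (if T.Adj u v ∧ G.Adj a b ∧ T.dist a u < T.dist a v ∧
          T.dist b v < T.dist b u then cG a b else 0) from
    Finset.sum_congr rfl fun u _ => Finset.sum_congr rfl fun v _ => step1 u v]
  have hsw := GHaux.swap4 (f := fun u v a b => if T.Adj u v ∧ G.Adj a b ∧ T.dist a u < T.dist a v ∧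
      T.dist b v < T.dist b u then cG a b else (0:ℝ))
  rw [hsw]
  refine Finset.sum_congr rfl fun a _ => Finset.sum_congr rfl fun b _ => ?_
  by_cases hG : G.Adj a b
  · rw [if_pos hG]
    have : ∀ u v, (if T.Adj u v ∧ G.Adj a b ∧ T.dist a u < T.dist a v ∧
          T.dist b v < T.dist b u then cG a b else 0)
        = cG a b * (if T.Adj u v ∧ T.dist a u < T.dist a v ∧
          T.dist b v < T.dist b u then (1 : ℝ) else 0) := by
      intro u v
      by_cases hcond : T.Adj u v ∧ T.dist a u < T.dist a v ∧ T.dist b v < T.dist b u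
      · rw [if_pos ⟨hcond.1, hG, hcond.2⟩, if_pos hcond, mul_one]
      · rw [if_neg (by rintro ⟨h1, -, h2⟩; exact hcond ⟨h1, h2⟩), if_neg hcond, mul_zero]
    simp_rw [this, ← Finset.mul_sum]
    rw [GHaux.count hT a b]
  · rw [if_neg hG]
    refine (Finset.sum_eq_zero fun u _ => Finset.sum_eq_zero fun v _ => ?_).symm
    exact if_neg fun h => hG h.2.1
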